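/- Let x ∈ (0,1)^N and set U = 1/(Σ_{i=1}^N x_i). Then −U² · Σ_{i=1}^N (β b_i(x)(1 − x_i) − δ x_i) ≤ β λ1 + (δ − β d_min)·U. -/

import Mathlib

open Matrix

/-- Rayleigh-quotient bound: if every eigenvalue of the real symmetric matrix `A` is at most
`lam1`, then `y ⬝ᵥ A *ᵥ y ≤ lam1 * (y ⬝ᵥ y)`. -/
lemma rayleigh_bound {N : ℕ} (A : Matrix (Fin N) (Fin N) ℝ) (hA_symm : A.IsSymm)
    (lam1 : ℝ)
    (hlam1_max : ∀ (μ : ℝ) (v : Fin N → ℝ), v ≠ 0 → A.mulVec v = μ • v → μ ≤ lam1)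
    (y : Fin N → ℝ) :
    y ⬝ᵥ A *ᵥ y ≤ lam1 * (y ⬝ᵥ y) := by
  have hA : A.IsHermitian := hA_symm
  set b := hA.eigenvectorBasis with hb
  set μ := hA.eigenvalues with hμ
  have hμle : ∀ i, μ i ≤ lam1 := by
    intro i
    exact hlam1_max (μ i) (b i) (fun h => b.orthonormal.ne_zero i (WithLp.ofLp_injective 2 (by rw [h]; rfl)))
      (hA.mulVec_eigenvectorBasis i)
  -- inner product on EuclideanSpace ℝ is dotProduct
  have hinner : ∀ u v : EuclideanSpace ℝ (Fin N),
      (inner ℝ u v : ℝ) = (u : Fin N → ℝ) ⬝ᵥ (v : Fin N → ℝ) := by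
    intro u v
    simp [PiLp.inner_apply, RCLike.inner_apply, dotProduct, mul_comm]
  set y' : EuclideanSpace ℝ (Fin N) := WithLp.toLp 2 y with hy'
  set z : EuclideanSpace ℝ (Fin N) := WithLp.toLp 2 (A *ᵥ y) with hz
  have key : ∀ i, (inner ℝ (b i) z : ℝ) = μ i * (inner ℝ (b i) y' : ℝ) := by
    intro i
    have h1 : (inner ℝ (b i) z : ℝ) = ((b i : Fin N → ℝ)) ⬝ᵥ (A *ᵥ y) := hinner _ _
    have h2 : ((b i : Fin N → ℝ)) ⬝ᵥ (A *ᵥ y) = (A *ᵥ (b i : Fin N → ℝ)) ⬝ᵥ y := by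
      rw [dotProduct_mulVec, ← Matrix.mulVec_transpose, hA_symm.eq]
    have h3 : A *ᵥ (b i : Fin N → ℝ) = μ i • (b i : Fin N → ℝ) :=
      hA.mulVec_eigenvectorBasis i
    rw [h1, h2, h3, smul_dotProduct]
    rw [hinner (b i) y']
    rfl
  have hAy : y ⬝ᵥ A *ᵥ y = ∑ i, μ i * (inner ℝ (b i) y' : ℝ) ^ 2 := by
    have := b.sum_inner_mul_inner y' z
    rw [hinner y' z] at this
    rw [hz] at this
    rw [← this]
    refine Finset.sum_congr rfl fun i _ => ?_
    rw [key i, real_inner_comm y' (b i)]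
    ring
  have hyy : y ⬝ᵥ y = ∑ i, (inner ℝ (b i) y' : ℝ) ^ 2 := by
    have := b.sum_inner_mul_inner y' y'
    rw [hinner y' y'] at this
    rw [← this]
    refine Finset.sum_congr rfl fun i _ => ?_
    rw [real_inner_comm y' (b i)]
    ring
  rw [hAy, hyy, Finset.mul_sum]
  refine Finset.sum_le_sum fun i _ => ?_
  exact mul_le_mul_of_nonneg_right (hμle i) (sq_nonneg _)

/-- Drift estimate (fibound2) in the stochastic-permanence lemma: for `x ∈ (0,1)^N` and
`U = 1/∑ᵢ xᵢ`, `-U² ∑ i (β b_i(x)(1-x_i) - δ x_i) ≤ β λ₁ + (δ - β d_min) U`. -/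
theorem drift_U_estimate
    (N : ℕ) (hN : 1 ≤ N)
    (A : Matrix (Fin N) (Fin N) ℝ)
    (hA_symm : A.IsSymm)
    (hA_01 : ∀ i j, A i j = 0 ∨ A i j = 1)
    (hA_diag : ∀ i, A i i = 0)
    (lam1 : ℝ)
    (hlam1_eig : ∃ v : Fin N → ℝ, v ≠ 0 ∧ A.mulVec v = lam1 • v)
    (hlam1_max : ∀ (μ : ℝ) (v : Fin N → ℝ), v ≠ 0 → A.mulVec v = μ • v → μ ≤ lam1)
    (dmin : ℝ)
    (hdmin_le : ∀ i, dmin ≤ ∑ j, A i j)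
    (hdmin_mem : ∃ i, dmin = ∑ j, A i j)
    (β δ : ℝ) (hβ : 0 ≤ β) (hδ : 0 ≤ δ)
    (x : Fin N → ℝ) (hx : ∀ i, x i ∈ Set.Ioo (0 : ℝ) 1)
    (U : ℝ) (hU : U = 1 / ∑ i, x i) :
    -U ^ 2 * ∑ i, (β * (∑ j, A i j * x j) * (1 - x i) - δ * x i)
      ≤ β * lam1 + (δ - β * dmin) * U := by
  haveI : NeZero N := ⟨Nat.one_le_iff_ne_zero.mp hN⟩
  set S : ℝ := ∑ i, x i with hS
  have hxpos : ∀ i, 0 < x i := fun i => (hx i).1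
  have hSpos : 0 < S := Finset.sum_pos (fun i _ => hxpos i) ⟨0, Finset.mem_univ 0⟩
  have hUpos : 0 < U := by rw [hU]; positivity
  have hUS : U * S = 1 := by rw [hU]; field_simp
  -- lam1 ≥ 0, via Rayleigh with a standard basis vector
  have hlam1_nonneg : 0 ≤ lam1 := by
    have h := rayleigh_bound A hA_symm lam1 hlam1_max (Pi.single 0 1)
    have h1 : (Pi.single (0 : Fin N) (1 : ℝ)) ⬝ᵥ A *ᵥ (Pi.single 0 1) = 0 := by
      simp [Matrix.mulVec, dotProduct, Pi.single_apply, hA_diag]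
    have h2 : (Pi.single (0 : Fin N) (1 : ℝ)) ⬝ᵥ (Pi.single 0 1) = 1 := by
      simp [dotProduct, Pi.single_apply]
    rw [h1, h2, mul_one] at h
    exact h
  -- Rayleigh bound for x
  have hQ : ∑ i, (∑ j, A i j * x j) * x i ≤ lam1 * ∑ i, (x i) ^ 2 := by
    have h := rayleigh_bound A hA_symm lam1 hlam1_max x
    have h1 : x ⬝ᵥ A *ᵥ x = ∑ i, (∑ j, A i j * x j) * x i := by
      simp [dotProduct, Matrix.mulVec, mul_comm]
    have h2 : x ⬝ᵥ x = ∑ i, (x i) ^ 2 := by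
      simp [dotProduct, sq]
    rw [h1, h2] at h
    exact h
  -- ∑ x_i^2 ≤ S^2
  have hsq : ∑ i, (x i) ^ 2 ≤ S ^ 2 := by
    have : ∀ i ∈ Finset.univ, (x i) ^ 2 ≤ x i * S := by
      intro i _
      have hxiS : x i ≤ S := Finset.single_le_sum (fun j _ => (hxpos j).le) (Finset.mem_univ i)
      rw [sq]
      exact mul_le_mul_of_nonneg_left hxiS (hxpos i).le
    calc ∑ i, (x i) ^ 2 ≤ ∑ i, x i * S := Finset.sum_le_sum this
      _ = S * S := by rw [← Finset.sum_mul]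
      _ = S ^ 2 := (sq S).symm
  have hQS : ∑ i, (∑ j, A i j * x j) * x i ≤ lam1 * S ^ 2 :=
    hQ.trans (mul_le_mul_of_nonneg_left hsq hlam1_nonneg)
  -- P = ∑_i ∑_j A i j x j ≥ dmin * S
  have hP : dmin * S ≤ ∑ i, ∑ j, A i j * x j := by
    have hswap : ∑ i, ∑ j, A i j * x j = ∑ j, (∑ i, A i j) * x j := by
      rw [Finset.sum_comm]
      refine Finset.sum_congr rfl fun j _ => ?_
      rw [Finset.sum_mul]
    have hcol : ∀ j, dmin ≤ ∑ i, A i j := by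
      intro j
      have := hdmin_le j
      calc dmin ≤ ∑ i, A j i := this
        _ = ∑ i, A i j := Finset.sum_congr rfl fun i _ => hA_symm.apply j i ▸ rfl
    rw [hswap, hS, Finset.mul_sum]
    refine Finset.sum_le_sum fun j _ => ?_
    rw [mul_comm dmin (x j)]
    calc x j * dmin ≤ x j * (∑ i, A i j) :=
          mul_le_mul_of_nonneg_left (hcol j) (hxpos j).le
      _ = (∑ i, A i j) * x j := mul_comm _ _
  -- expand the LHS
  have hexp : -U ^ 2 * ∑ i, (β * (∑ j, A i j * x j) * (1 - x i) - δ * x i)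
      = -U ^ 2 * β * (∑ i, ∑ j, A i j * x j)
        + U ^ 2 * β * (∑ i, (∑ j, A i j * x j) * x i) + δ * U := by
    have e1 : ∑ i, (β * (∑ j, A i j * x j) * (1 - x i) - δ * x i)
        = β * (∑ i, ∑ j, A i j * x j) - β * (∑ i, (∑ j, A i j * x j) * x i) - δ * S := by
      rw [hS, Finset.mul_sum, Finset.mul_sum, Finset.mul_sum]
      rw [← Finset.sum_sub_distrib, ← Finset.sum_sub_distrib]
      refine Finset.sum_congr rfl fun i _ => ?_
      ring
    rw [e1]
    have : U ^ 2 * (δ * S) = δ * U := by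
      have : U ^ 2 * S = U := by
        rw [sq, mul_assoc, hUS, mul_one]
      calc U ^ 2 * (δ * S) = δ * (U ^ 2 * S) := by ring
        _ = δ * U := by rw [this]
    nlinarith [this]
  rw [hexp]
  have hU2 : (0 : ℝ) < U ^ 2 := by positivity
  -- two key bounds
  have key1 : U ^ 2 * β * (∑ i, (∑ j, A i j * x j) * x i) ≤ β * lam1 := by
    have h1 : U ^ 2 * (∑ i, (∑ j, A i j * x j) * x i) ≤ U ^ 2 * (lam1 * S ^ 2) :=
      mul_le_mul_of_nonneg_left hQS hU2.le
    have h2 : U ^ 2 * (lam1 * S ^ 2) = lam1 := by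
      have : (U * S) ^ 2 = 1 := by rw [hUS]; norm_num
      nlinarith [this]
    calc U ^ 2 * β * (∑ i, (∑ j, A i j * x j) * x i)
        = β * (U ^ 2 * (∑ i, (∑ j, A i j * x j) * x i)) := by ring
      _ ≤ β * (U ^ 2 * (lam1 * S ^ 2)) := mul_le_mul_of_nonneg_left h1 hβ
      _ = β * lam1 := by rw [h2]
  have key2 : -U ^ 2 * β * (∑ i, ∑ j, A i j * x j) ≤ -(β * dmin) * U := by
    have h1 : U ^ 2 * (dmin * S) ≤ U ^ 2 * (∑ i, ∑ j, A i j * x j) :=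
      mul_le_mul_of_nonneg_left hP hU2.le
    have h2 : U ^ 2 * (dmin * S) = dmin * U := by
      have : U ^ 2 * S = U := by rw [sq, mul_assoc, hUS, mul_one]
      calc U ^ 2 * (dmin * S) = dmin * (U ^ 2 * S) := by ring
        _ = dmin * U := by rw [this]
    have h3 : dmin * U ≤ U ^ 2 * (∑ i, ∑ j, A i j * x j) := h2 ▸ h1
    have h4 : β * (dmin * U) ≤ β * (U ^ 2 * (∑ i, ∑ j, A i j * x j)) :=
      mul_le_mul_of_nonneg_left h3 hβ
    nlinarith [h4]
  nlinarith [key1, key2]
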